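/- arXiv:1501.02048 — 2 statements merged into one kernel-verified Lean document; each statement's English description precedes it below -/
import Mathlib

section
/- Let $f:[0,\infty)\to[0,1]$ be measurable with $\int_0^\infty f(r)r^{n-1}dr = \int_0^{r_n} r^{n-1}dr$, and let $\phi:[0,\infty)\to[0,\infty)$ be strictly increasing. If $\int_0^\infty \phi(r)f(r)r^{n-1}dr = \int_0^{r_n}\phi(r)r^{n-1}dr$ (both finite), then $f = \mathbf{1}_{[0,r_n]}$ almost everywhere. -/
open MeasureTheory Set

/-- Equality case of the bathtub principle: if `φ` is strictly increasing and
`∫₀^∞ φ(r) f(r) r^(n-1) dr = ∫₀^{rₙ} φ(r) r^(n-1) dr` (both finite), then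
`f = 𝟙_{[0,rₙ]}` almost everywhere on `(0,∞)`. -/
theorem bathtub_principle_equality (n : ℕ) (hn : 0 < n) (f : ℝ → ℝ) (hf : Measurable f)
    (hf01 : ∀ r, 0 ≤ f r ∧ f r ≤ 1) (rn : ℝ) (hrn : 0 < rn)
    (hmass : ∫⁻ r in Ioi (0:ℝ), ENNReal.ofReal (f r * r ^ (n - 1))
      = ∫⁻ r in Ioc (0:ℝ) rn, ENNReal.ofReal (r ^ (n - 1)))
    (φ : ℝ → ℝ) (hφmono : StrictMonoOn φ (Ici (0:ℝ))) (hφ0 : ∀ r, 0 ≤ φ r)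
    (hfin : ∫⁻ r in Ioi (0:ℝ), ENNReal.ofReal (φ r * f r * r ^ (n - 1)) ≠ ⊤)
    (heq : ∫⁻ r in Ioi (0:ℝ), ENNReal.ofReal (φ r * f r * r ^ (n - 1))
      = ∫⁻ r in Ioc (0:ℝ) rn, ENNReal.ofReal (φ r * r ^ (n - 1))) :
    ∀ᵐ r ∂(volume.restrict (Ioi (0:ℝ))), f r = Set.indicator (Icc (0:ℝ) rn) (fun _ => 1) r := by
  set μ := volume.restrict (Ioi (0:ℝ)) with hμ
  set w : ℝ → ℝ := fun r => r ^ (n - 1) with hwdef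
  set ind : ℝ → ℝ := Set.indicator (Ioc (0:ℝ) rn) (fun _ => (1:ℝ)) with hinddef
  have hwm : Measurable w := (measurable_id.pow_const _)
  have hindm : Measurable ind := (measurable_const.indicator measurableSet_Ioc)
  have hφae : AEMeasurable φ μ :=
    aemeasurable_restrict_of_monotoneOn measurableSet_Ioi
      ((hφmono.monotoneOn).mono Ioi_subset_Ici_self)
  have hmem : ∀ᵐ r ∂μ, r ∈ Ioi (0:ℝ) := ae_restrict_mem measurableSet_Ioi
  -- restriction agreement
  have hres : μ.restrict (Ioc (0:ℝ) rn) = volume.restrict (Ioc (0:ℝ) rn) := by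
    rw [hμ, Measure.restrict_restrict measurableSet_Ioc,
      Set.inter_eq_self_of_subset_left Ioc_subset_Ioi_self]
  -- ofReal identities for indicator forms
  have hind_of : ∀ r, ENNReal.ofReal (ind r * w r)
      = Set.indicator (Ioc (0:ℝ) rn) (fun r => ENNReal.ofReal (w r)) r := by
    intro r
    by_cases h : r ∈ Ioc (0:ℝ) rn <;> simp [hinddef, Set.indicator, h]
  have hφind_of : ∀ r, ENNReal.ofReal (φ r * ind r * w r)
      = Set.indicator (Ioc (0:ℝ) rn) (fun r => ENNReal.ofReal (φ r * w r)) r := by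
    intro r
    by_cases h : r ∈ Ioc (0:ℝ) rn <;> simp [hinddef, Set.indicator, h]
  -- lintegral identities
  have hmass' : ∫⁻ r, ENNReal.ofReal (f r * w r) ∂μ = ∫⁻ r, ENNReal.ofReal (ind r * w r) ∂μ := by
    simp only [hind_of]
    rw [lintegral_indicator measurableSet_Ioc _, hres]
    exact hmass
  have heq' : ∫⁻ r, ENNReal.ofReal (φ r * f r * w r) ∂μ
      = ∫⁻ r, ENNReal.ofReal (φ r * ind r * w r) ∂μ := by
    simp only [hφind_of]
    rw [lintegral_indicator measurableSet_Ioc _, hres]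
    exact heq
  -- finiteness of the mass integral
  have hIw : IntegrableOn w (Ioc (0:ℝ) rn) volume :=
    (continuous_pow (n-1)).integrableOn_Ioc
  have hRfin : ∫⁻ r in Ioc (0:ℝ) rn, ENNReal.ofReal (w r) ≠ ⊤ := by
    have h0 : 0 ≤ᵐ[volume.restrict (Ioc (0:ℝ) rn)] w := by
      filter_upwards [ae_restrict_mem measurableSet_Ioc] with r hr
      exact pow_nonneg hr.1.le _
    exact ((hasFiniteIntegral_iff_ofReal h0).1 hIw.2).ne
  -- integrabilities
  have hfw_nonneg : 0 ≤ᵐ[μ] fun r => f r * w r := by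
    filter_upwards [hmem] with r hr
    exact mul_nonneg (hf01 r).1 (pow_nonneg (le_of_lt hr) _)
  have hindw_nonneg : 0 ≤ᵐ[μ] fun r => ind r * w r := by
    filter_upwards [hmem] with r hr
    exact mul_nonneg (Set.indicator_nonneg (fun _ _ => zero_le_one) r)
      (pow_nonneg (le_of_lt hr) _)
  have hφfw_nonneg : 0 ≤ᵐ[μ] fun r => φ r * f r * w r := by
    filter_upwards [hmem] with r hr
    exact mul_nonneg (mul_nonneg (hφ0 r) (hf01 r).1) (pow_nonneg (le_of_lt hr) _)
  have hφindw_nonneg : 0 ≤ᵐ[μ] fun r => φ r * ind r * w r := by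
    filter_upwards [hmem] with r hr
    exact mul_nonneg (mul_nonneg (hφ0 r)
      (Set.indicator_nonneg (fun _ _ => zero_le_one) r)) (pow_nonneg (le_of_lt hr) _)
  have hI_fw : Integrable (fun r => f r * w r) μ :=
    ⟨(hf.mul hwm).aestronglyMeasurable,
      (hasFiniteIntegral_iff_ofReal hfw_nonneg).2 (lt_of_le_of_ne (hmass.le.trans le_top)
        (by rw [hmass]; exact hRfin))⟩
  have hI_indw : Integrable (fun r => ind r * w r) μ :=
    ⟨(hindm.mul hwm).aestronglyMeasurable,
      (hasFiniteIntegral_iff_ofReal hindw_nonneg).2 (by rw [← hmass']; exact (hmass ▸ hRfin).lt_top)⟩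
  have hI_φfw : Integrable (fun r => φ r * f r * w r) μ :=
    ⟨((hφae.mul (hf.aemeasurable)).mul hwm.aemeasurable).aestronglyMeasurable,
      (hasFiniteIntegral_iff_ofReal hφfw_nonneg).2 hfin.lt_top⟩
  have hI_φindw : Integrable (fun r => φ r * ind r * w r) μ :=
    ⟨((hφae.mul (hindm.aemeasurable)).mul hwm.aemeasurable).aestronglyMeasurable,
      (hasFiniteIntegral_iff_ofReal hφindw_nonneg).2 (by rw [← heq']; exact hfin.lt_top)⟩
  -- real-integral equalities
  have hmassR : ∫ r, f r * w r ∂μ = ∫ r, ind r * w r ∂μ := by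
    rw [integral_eq_lintegral_of_nonneg_ae hfw_nonneg hI_fw.1,
      integral_eq_lintegral_of_nonneg_ae hindw_nonneg hI_indw.1, hmass']
  have heqR : ∫ r, φ r * f r * w r ∂μ = ∫ r, φ r * ind r * w r ∂μ := by
    rw [integral_eq_lintegral_of_nonneg_ae hφfw_nonneg hI_φfw.1,
      integral_eq_lintegral_of_nonneg_ae hφindw_nonneg hI_φindw.1, heq']
  -- the key nonnegative function with zero integral
  set H : ℝ → ℝ := fun r => (φ rn - φ r) * ((ind r - f r) * w r) with hHdef
  have hI_gw : Integrable (fun r => (ind r - f r) * w r) μ :=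
    (hI_indw.sub hI_fw).congr (Filter.Eventually.of_forall fun r => by
      simp only [Pi.sub_apply]; ring)
  have hI_φgw : Integrable (fun r => φ r * ((ind r - f r) * w r)) μ :=
    (hI_φindw.sub hI_φfw).congr (Filter.Eventually.of_forall fun r => by
      simp only [Pi.sub_apply]; ring)
  have h1 : ∫ r, (ind r - f r) * w r ∂μ = 0 := by
    have e : ∀ r, (ind r - f r) * w r = ind r * w r - f r * w r := fun r => by ring
    simp only [e]
    rw [integral_sub hI_indw hI_fw, hmassR, sub_self]
  have h2 : ∫ r, φ r * ((ind r - f r) * w r) ∂μ = 0 := by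
    have e : ∀ r, φ r * ((ind r - f r) * w r) = φ r * ind r * w r - φ r * f r * w r :=
      fun r => by ring
    simp only [e]
    rw [integral_sub hI_φindw hI_φfw, heqR, sub_self]
  have hI_H : Integrable H μ :=
    ((hI_gw.const_mul (φ rn)).sub hI_φgw).congr (Filter.Eventually.of_forall fun r => by
      simp only [Pi.sub_apply, hHdef]; ring)
  have hH_int0 : ∫ r, H r ∂μ = 0 := by
    have e : ∀ r, H r = φ rn * ((ind r - f r) * w r) - φ r * ((ind r - f r) * w r) :=
      fun r => by simp only [hHdef]; ring
    simp only [e]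
    rw [integral_sub (hI_gw.const_mul (φ rn)) hI_φgw, integral_const_mul, h1, h2]
    ring
  have hH_nonneg : 0 ≤ᵐ[μ] H := by
    filter_upwards [hmem] with r hr
    have hw0 : 0 ≤ w r := pow_nonneg (le_of_lt hr) _
    simp only [hHdef, Pi.zero_apply]
    by_cases h : r ≤ rn
    · have h1 : ind r = 1 := Set.indicator_of_mem (Set.mem_Ioc.mpr ⟨hr, h⟩) _
      have h2 : φ r ≤ φ rn := (hφmono.monotoneOn) (mem_Ici.2 (le_of_lt hr)) (mem_Ici.2 (le_of_lt hrn)) h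
      exact mul_nonneg (sub_nonneg.2 h2)
        (mul_nonneg (by rw [h1]; linarith [(hf01 r).2]) hw0)
    · have h1 : ind r = 0 := Set.indicator_of_notMem (fun hm => h (Set.mem_Ioc.mp hm).2) _
      have h2 : φ rn ≤ φ r := le_of_lt ((hφmono) (mem_Ici.2 (le_of_lt hrn)) (mem_Ici.2 (le_of_lt hr)) (lt_of_not_ge h))
      have h3 : (ind r - f r) * w r ≤ 0 :=
        mul_nonpos_of_nonpos_of_nonneg (by rw [h1]; linarith [(hf01 r).1]) hw0
      nlinarith
  have hH0 : H =ᵐ[μ] 0 := (integral_eq_zero_iff_of_nonneg_ae hH_nonneg hI_H).1 hH_int0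
  have hne : ∀ᵐ r ∂μ, r ≠ rn := by
    have h1 : ∀ᵐ (r : ℝ), r ≠ rn := by
      rw [ae_iff]
      simp only [ne_eq, not_not, Set.setOf_eq_eq_singleton]
      exact measure_singleton rn
    exact h1.filter_mono (ae_mono Measure.restrict_le_self)
  filter_upwards [hH0, hmem, hne] with r hr hrmem hrne
  have hrpos : (0:ℝ) < r := hrmem
  simp only [hHdef, Pi.zero_apply] at hr
  have hwne : w r ≠ 0 := (pow_pos hrpos _).ne'
  have hφne : φ rn - φ r ≠ 0 := by
    refine sub_ne_zero.2 fun h => hrne ?_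
    exact (hφmono.injOn (le_of_lt hrn) (le_of_lt hrpos) h).symm
  have hkey : (ind r - f r) * w r = 0 := by
    rcases mul_eq_zero.1 hr with h | h
    · exact absurd h hφne
    · exact h
  have hfind : f r = ind r := by
    rcases mul_eq_zero.1 hkey with h | h
    · linarith [sub_eq_zero.1 h]
    · exact absurd h hwne
  rw [hfind, hinddef]
  by_cases h : r ≤ rn <;>
    simp [Set.indicator, mem_Ioc, mem_Icc, hrpos, hrpos.le, h]
end

section
/- Let $E_0, E_1$ be $k$-dimensional subspaces of $\mathbb{R}^n$ with $\|P_{E_0}-P_{E_1}\|_{op} \le \varepsilon$, let $D = \mathrm{diag}(\sigma^2,\dots,\sigma^2,1,\dots,1)$ ($\sigma^2$ in the first $k$ coordinates, $E_0$ the span of the first $k$ coordinate vectors), and let $g$ be a standard Gaussian vector in $\mathbb{R}^n$. Then the covariance matrix $A$ of $P_{E_1}D^{1/2}g$ (as a Gaussian vector in $E_1$) satisfies $(\det A)^{1/k} \le \sigma^2 + \varepsilon^2$, and hence the density $h$ of $P_{E_1}D^{1/2}g$ satisfies $\|h\|_\infty^{1/k} \ge (2\pi(\sigma^2+\varepsilon^2))^{-1/2}$.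 -/
set_option maxHeartbeats 1000000

open MeasureTheory Set Real

/-- If `E₀` is the span of the first `k` coordinate vectors, `E₁` is a `k`-dimensional
subspace with `‖P_{E₀} - P_{E₁}‖ ≤ ε`, and `D = diag(σ²,…,σ²,1,…,1)` (`σ²` in the first
`k` coordinates), then the covariance `A = P_{E₁} D P_{E₁}|_{E₁}` of `P_{E₁}D^{1/2}g`
satisfies `(det A)^{1/k} ≤ σ² + ε²`; hence the Gaussian density with covariance `A`
satisfies `‖h‖_∞^{1/k} = ((2π)^k det A)^{-1/(2k)} ≥ (2π(σ² + ε²))^{-1/2}`. -/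
theorem projected_gaussian_covariance_det_bound (n k : ℕ) (hk : 1 ≤ k) (hkn : k ≤ n)
    (σ : ℝ) (hσ : σ ∈ Set.Ioc (0:ℝ) 1) (ε : ℝ) (hε : 0 < ε)
    (d : Fin n → ℝ) (hd : ∀ i, d i = if (i : ℕ) < k then σ ^ 2 else 1)
    (E₀ E₁ : Submodule ℝ (EuclideanSpace ℝ (Fin n)))
    (hE₀ : E₀ = Submodule.span ℝ
      (Set.range fun i : Fin k => (EuclideanSpace.single (Fin.castLE hkn i) (1:ℝ))))
    (hE₁ : Module.finrank ℝ E₁ = k)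
    (hdist : ‖E₀.subtypeL.comp E₀.orthogonalProjection
        - E₁.subtypeL.comp E₁.orthogonalProjection‖ ≤ ε)
    (A : E₁ →ₗ[ℝ] E₁)
    (hA : A = E₁.orthogonalProjection.toLinearMap.comp
      ((Matrix.toEuclideanLin (Matrix.diagonal d)).comp E₁.subtype)) :
    (LinearMap.det A) ^ ((k:ℝ)⁻¹) ≤ σ ^ 2 + ε ^ 2 ∧
    (2 * π * (σ ^ 2 + ε ^ 2)) ^ (-(1:ℝ)/2)
      ≤ (((2 * π) ^ k * LinearMap.det A) ^ (-(1:ℝ)/2)) ^ ((k:ℝ)⁻¹) := by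
  classical
  obtain ⟨hσ0, hσ1⟩ := hσ
  -- coordinate formula for `D`
  have hDapp : ∀ (x : EuclideanSpace ℝ (Fin n)) (i : Fin n),
      Matrix.toEuclideanLin (Matrix.diagonal d) x i = d i * x i := by
    intro x i
    simp [Matrix.toEuclideanLin_apply, Matrix.mulVec_diagonal]
  -- inner product formula for `A`
  have key : ∀ v w : E₁, (inner ℝ (A v) w : ℝ)
      = ∑ i, d i * (v : EuclideanSpace ℝ (Fin n)) i * (w : EuclideanSpace ℝ (Fin n)) i := by
    intro v w
    rw [hA]
    simp only [LinearMap.comp_apply, ContinuousLinearMap.coe_coe, Submodule.subtype_apply]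
    rw [Submodule.inner_orthogonalProjection_eq_of_mem_right]
    rw [PiLp.inner_apply]
    refine Finset.sum_congr rfl fun i _ => ?_
    rw [hDapp]
    simp [mul_comm, mul_assoc, mul_left_comm]
  have hnormsq : ∀ x : EuclideanSpace ℝ (Fin n), ‖x‖^2 = ∑ i, x i * x i := by
    intro x
    rw [← real_inner_self_eq_norm_sq, PiLp.inner_apply]
    simp [RCLike.inner_apply, sq]
  -- elements of `E₀` are supported on the first `k` coordinates
  have hE₀supp : ∀ p ∈ E₀, ∀ i : Fin n, k ≤ (i:ℕ) → p i = 0 := by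
    intro p hp
    rw [hE₀] at hp
    induction hp using Submodule.span_induction with
    | mem x hx =>
        obtain ⟨j, rfl⟩ := hx
        intro i hi
        have hne : i ≠ Fin.castLE hkn j := by
          intro h
          have : (i : ℕ) = (j : ℕ) := by rw [h]; rfl
          have := j.2
          omega
        simp [EuclideanSpace.single_apply, hne]
    | zero => intro i _; rfl
    | add x y _ _ hx hy => intro i hi; simp [PiLp.add_apply, hx i hi, hy i hi]
    | smul c x _ hx => intro i hi; simp [PiLp.smul_apply, hx i hi]
  -- main quadratic form bounds
  have quad : ∀ x : EuclideanSpace ℝ (Fin n), x ∈ E₁ →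
      σ^2 * ‖x‖^2 ≤ ∑ i, d i * x i * x i ∧
      ∑ i, d i * x i * x i ≤ (σ^2 + ε^2) * ‖x‖^2 := by
    intro x hx
    set p : EuclideanSpace ℝ (Fin n) := ↑(E₀.orthogonalProjection x) with hp
    set S : ℝ := ∑ i : Fin n, (if (i:ℕ) < k then x i * x i else 0) with hS
    have hp0 : ∀ i : Fin n, k ≤ (i:ℕ) → p i = 0 :=
      hE₀supp _ (Submodule.coe_mem _)
    have hip : (inner ℝ (x - p) p : ℝ) = 0 :=
      Submodule.starProjection_inner_eq_zero (K := E₀) x p (Submodule.coe_mem _)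
    have hxp : ‖x‖^2 = ‖x - p‖^2 + ‖p‖^2 := by
      have := norm_add_sq_real (x - p) p
      rw [sub_add_cancel, hip] at this
      linarith
    -- distance bound
    have hpx : ‖x - p‖ ≤ ε * ‖x‖ := by
      have h1 := (E₀.subtypeL.comp E₀.orthogonalProjection
        - E₁.subtypeL.comp E₁.orthogonalProjection).le_opNorm x
      have h2 : (E₀.subtypeL.comp E₀.orthogonalProjection
          - E₁.subtypeL.comp E₁.orthogonalProjection) x = p - x := by
        have : E₁.orthogonalProjection x = ⟨x, hx⟩ := by
          exact Submodule.orthogonalProjection_mem_subspace_eq_self (⟨x, hx⟩ : E₁)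
        simp [ContinuousLinearMap.sub_apply, this, hp]
      rw [h2] at h1
      rw [norm_sub_rev]
      exact h1.trans (mul_le_mul_of_nonneg_right hdist (norm_nonneg x))
    -- Cauchy-Schwarz: ‖p‖² ≤ S
    have hpS : ‖p‖^2 ≤ S := by
      set y : EuclideanSpace ℝ (Fin n) :=
        (WithLp.equiv 2 _).symm (fun i => if (i:ℕ) < k then x i else 0) with hy
      have hyapp : ∀ i, y i = if (i:ℕ) < k then x i else 0 := fun i => rfl
      have hyn : ‖y‖^2 = S := by
        rw [hnormsq, hS]
        refine Finset.sum_congr rfl fun i _ => ?_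
        rw [hyapp]; split <;> simp
      have hpy : (inner ℝ p y : ℝ) = ‖p‖^2 := by
        have h3 : (inner ℝ p x : ℝ) = ‖p‖^2 := by
          have := hip
          rw [inner_sub_left] at this
          rw [← real_inner_self_eq_norm_sq, real_inner_comm]
          linarith
        rw [← h3, PiLp.inner_apply, PiLp.inner_apply]
        refine Finset.sum_congr rfl fun i _ => ?_
        rw [hyapp]
        rcases lt_or_ge (i:ℕ) k with h | h
        · simp [h]
        · simp [not_lt.2 h, hp0 i h]
      have hcs := real_inner_le_norm p y
      rw [hpy] at hcs
      nlinarith [norm_nonneg p, norm_nonneg y, hyn]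
    have hSle : S ≤ ‖x‖^2 := by
      rw [hnormsq, hS]
      refine Finset.sum_le_sum fun i _ => ?_
      split
      · exact le_rfl
      · exact mul_self_nonneg (x i)
    have hsum : ∑ i, d i * x i * x i = ‖x‖^2 - (1 - σ^2) * S := by
      rw [hnormsq, hS, Finset.mul_sum, ← Finset.sum_sub_distrib]
      refine Finset.sum_congr rfl fun i _ => ?_
      rw [hd]
      split <;> ring
    clear_value S p
    have h1σ : (0:ℝ) ≤ 1 - σ^2 := by nlinarith
    constructor
    · rw [hsum]
      nlinarith [mul_le_mul_of_nonneg_left hSle h1σ]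
    · rw [hsum]
      have key2 : ∀ a T s e : ℝ, 0 ≤ s → 0 ≤ e → 0 ≤ a → s ≤ 1 →
          a - e*a ≤ T → a - (1-s)*T ≤ (s+e)*a := by
        intro a T s e hs he ha hs1 hT
        nlinarith [mul_nonneg (mul_nonneg hs he) ha,
          mul_le_mul_of_nonneg_left hT (by linarith : (0:ℝ) ≤ 1-s)]
      have h5 : ‖x - p‖^2 ≤ (ε * ‖x‖)^2 := pow_le_pow_left₀ (norm_nonneg _) hpx 2
      have h5' : (ε * ‖x‖)^2 = ε^2 * ‖x‖^2 := by ring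
      have h6 : ‖x‖^2 - ε^2*‖x‖^2 ≤ S := by rw [h5'] at h5; linarith
      exact key2 (‖x‖^2) S (σ^2) (ε^2) (by positivity) (by positivity) (by positivity)
        (by nlinarith) h6
  -- `A` is symmetric, diagonalize it
  have hsymm : A.IsSymmetric := by
    intro v w
    rw [key v w, real_inner_comm (A w) v, key w v]
    exact Finset.sum_congr rfl fun i _ => by ring
  let b := hsymm.eigenvectorBasis hE₁
  let μ := hsymm.eigenvalues hE₁
  have happ : ∀ i, A (b i) = μ i • b i := fun i => hsymm.apply_eigenvectorBasis hE₁ i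
  have hdet : LinearMap.det A = ∏ i, μ i := by
    rw [← LinearMap.det_toMatrix b.toBasis]
    have hm : LinearMap.toMatrix b.toBasis b.toBasis A = Matrix.diagonal μ := by
      ext i j
      rw [LinearMap.toMatrix_apply, OrthonormalBasis.coe_toBasis, happ,
        LinearEquiv.map_smul, ← OrthonormalBasis.coe_toBasis, b.toBasis.repr_self]
      rw [Matrix.diagonal_apply]
      by_cases h : i = j
      · subst h; simp
      · simp [h, Finsupp.single_apply, Ne.symm h]
    rw [hm, Matrix.det_diagonal]
  -- eigenvalue bounds
  have hμbound : ∀ i, σ^2 ≤ μ i ∧ μ i ≤ σ^2 + ε^2 := by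
    intro i
    have hb1 : ‖b i‖ = 1 := b.orthonormal.1 i
    have hbc : ‖((b i : E₁) : EuclideanSpace ℝ (Fin n))‖ = 1 := hb1
    have hq := quad ((b i : E₁) : EuclideanSpace ℝ (Fin n)) (Submodule.coe_mem _)
    rw [hbc] at hq
    have hinner : (inner ℝ (A (b i)) (b i) : ℝ) = μ i := by
      rw [happ, real_inner_smul_left (x := b i) (y := b i), real_inner_self_eq_norm_sq, hb1]
      simp
    rw [key] at hinner
    constructor
    · rw [← hinner]; simpa using hq.1
    · rw [← hinner]; simpa using hq.2
  -- determinant bounds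
  have hσ2 : (0:ℝ) < σ^2 := by positivity
  have hdetpos : 0 < LinearMap.det A := by
    rw [hdet]
    exact Finset.prod_pos fun i _ => lt_of_lt_of_le hσ2 (hμbound i).1
  have hdetle : LinearMap.det A ≤ (σ^2 + ε^2)^k := by
    rw [hdet]
    calc ∏ i, μ i ≤ ∏ _i : Fin k, (σ^2 + ε^2) :=
          Finset.prod_le_prod (fun i _ => le_of_lt (lt_of_lt_of_le hσ2 (hμbound i).1))
            (fun i _ => (hμbound i).2)
      _ = (σ^2 + ε^2)^k := by rw [Finset.prod_const, Finset.card_univ, Fintype.card_fin]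
  have hk0 : k ≠ 0 := by omega
  have hse : (0:ℝ) < σ^2 + ε^2 := by positivity
  constructor
  · have h := Real.rpow_le_rpow hdetpos.le hdetle (by positivity : (0:ℝ) ≤ (k:ℝ)⁻¹)
    rwa [Real.pow_rpow_inv_natCast hse.le hk0] at h
  · have h2π : (0:ℝ) < 2 * π := by positivity
    have hbase : (0:ℝ) < (2*π)^k * LinearMap.det A := by positivity
    have hle : (2*π)^k * LinearMap.det A ≤ (2*π*(σ^2+ε^2))^k := by
      calc (2*π)^k * LinearMap.det A ≤ (2*π)^k * (σ^2+ε^2)^k :=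
            mul_le_mul_of_nonneg_left hdetle (by positivity : (0:ℝ) ≤ (2*π)^k)
        _ = (2*π*(σ^2+ε^2))^k := (mul_pow _ _ _).symm
    have step := Real.rpow_le_rpow_of_nonpos hbase hle
      (show -(1:ℝ)/2 * (k:ℝ)⁻¹ ≤ 0 by
        have h9 : (0:ℝ) ≤ (k:ℝ)⁻¹ := by positivity
        nlinarith)
    have lhs_eq : ((2*π*(σ^2+ε^2))^k) ^ (-(1:ℝ)/2 * (k:ℝ)⁻¹)
        = (2*π*(σ^2+ε^2)) ^ (-(1:ℝ)/2) := by
      rw [← Real.rpow_natCast (2*π*(σ^2+ε^2)) k, ← Real.rpow_mul (by positivity)]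
      congr 1
      have : (k:ℝ) ≠ 0 := Nat.cast_ne_zero.2 hk0
      field_simp
    have rhs_eq : (((2*π)^k * LinearMap.det A) ^ (-(1:ℝ)/2)) ^ ((k:ℝ)⁻¹)
        = ((2*π)^k * LinearMap.det A) ^ (-(1:ℝ)/2 * (k:ℝ)⁻¹) := by
      rw [← Real.rpow_mul hbase.le]
    rw [rhs_eq, ← lhs_eq]
    exact step
end
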